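/- Continuous exponential mechanism is ε-DP: The mechanism that, given X ∈ (a,b)^n and q ∈ [0,1], samples v ∈ (a,b) with density proportional to exp(ε·u(X,v)/2) where u(X,w) = −| |{x ∈ X : x < w}| − ⌊q·n⌋ |, is ε-differentially private with respect to adding or removing one data point. -/

import Mathlib

open MeasureTheory Real

/-- Datasets are finite sets of reals; neighbors differ by adding or removing one point. -/
def FNeighbor (X X' : Finset ℝ) : Prop :=
  (∃ x ∉ X, X' = insert x X) ∨ (∃ x ∉ X', X = insert x X')

/-- The single-quantile utility function `u(X, w) = −| |{x ∈ X : x < w}| − ⌊q·|X|⌋ |`. -/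
noncomputable def quantileUtility (q : ℝ) (X : Finset ℝ) (w : ℝ) : ℝ :=
  -|((X.filter (fun x => x < w)).card : ℝ) - (⌊q * X.card⌋ : ℤ)|

/-- The continuous exponential mechanism for a single quantile: it samples `v ∈ (a,b)`
with density proportional to `exp(ε·u(X,v)/2)`. -/
noncomputable def contExpMech (ε a b q : ℝ) (X : Finset ℝ) : Measure ℝ :=
  (volume.restrict (Set.Ioo a b)).withDensity
    (fun w => ENNReal.ofReal (Real.exp (ε * quantileUtility q X w / 2) /
      ∫ w' in Set.Ioo a b, Real.exp (ε * quantileUtility q X w' / 2)))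

lemma quantileUtility_measurable (q : ℝ) (X : Finset ℝ) :
    Measurable (quantileUtility q X) := by
  have hmono : Monotone (fun w => ((X.filter (fun x => x < w)).card : ℝ)) := by
    intro w w' hww'
    have : X.filter (fun x => x < w) ⊆ X.filter (fun x => x < w') := by
      intro y hy
      simp only [Finset.mem_filter] at hy ⊢
      exact ⟨hy.1, hy.2.trans_le hww'⟩
    have := Finset.card_le_card this
    show ((X.filter (fun x => x < w)).card : ℝ) ≤ ((X.filter (fun x => x < w')).card : ℝ)
    exact_mod_cast this
  exact ((hmono.measurable.sub measurable_const).abs).neg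

lemma quantileUtility_nonpos (q : ℝ) (X : Finset ℝ) (w : ℝ) :
    quantileUtility q X w ≤ 0 :=
  neg_nonpos.mpr (abs_nonneg _)

lemma quantileUtility_lb (q : ℝ) (hq : q ∈ Set.Icc (0 : ℝ) 1) (X : Finset ℝ) (w : ℝ) :
    -(X.card : ℝ) ≤ quantileUtility q X w := by
  have hc1 : (0 : ℝ) ≤ ((X.filter (fun x => x < w)).card : ℝ) := by positivity
  have hc2 : ((X.filter (fun x => x < w)).card : ℝ) ≤ (X.card : ℝ) := by
    exact_mod_cast Finset.card_le_card (Finset.filter_subset _ _)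
  have hm1 : (0 : ℝ) ≤ ((⌊q * X.card⌋ : ℤ) : ℝ) := by
    have : (0 : ℤ) ≤ ⌊q * X.card⌋ := Int.floor_nonneg.mpr (mul_nonneg hq.1 (Nat.cast_nonneg _))
    exact_mod_cast this
  have hm2 : ((⌊q * X.card⌋ : ℤ) : ℝ) ≤ (X.card : ℝ) := by
    have h1 : ((⌊q * X.card⌋ : ℤ) : ℝ) ≤ q * X.card := Int.floor_le _
    nlinarith [hq.2, (Nat.cast_nonneg X.card : (0:ℝ) ≤ X.card)]
  have : |((X.filter (fun x => x < w)).card : ℝ) - (⌊q * X.card⌋ : ℤ)| ≤ (X.card : ℝ) :=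
    abs_sub_le_iff.mpr ⟨by linarith, by linarith⟩
  simpa [quantileUtility] using neg_le_neg this

lemma quantileUtility_sens (q : ℝ) (hq : q ∈ Set.Icc (0 : ℝ) 1) (X : Finset ℝ)
    (x : ℝ) (hx : x ∉ X) (w : ℝ) :
    |quantileUtility q X w - quantileUtility q (insert x X) w| ≤ 1 := by
  set c : ℝ := ((X.filter (fun y => y < w)).card : ℝ) with hc
  set m : ℝ := ((⌊q * X.card⌋ : ℤ) : ℝ) with hm
  set m' : ℝ := ((⌊q * ((insert x X).card)⌋ : ℤ) : ℝ) with hm'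
  have hcardins : ((insert x X).card : ℝ) = (X.card : ℝ) + 1 := by
    rw [Finset.card_insert_of_notMem hx]; push_cast; ring
  -- bounds on m' - m
  have hmm1 : m ≤ m' := by
    have : ⌊q * X.card⌋ ≤ ⌊q * ((insert x X).card)⌋ := by
      apply Int.floor_le_floor
      rw [hcardins]
      nlinarith [hq.1]
    rw [hm, hm']
    exact_mod_cast this
  have hmm2 : m' ≤ m + 1 := by
    have h1 : q * ((insert x X).card : ℝ) ≤ q * X.card + 1 := by
      rw [hcardins]; nlinarith [hq.2, hq.1]
    have : ⌊q * ((insert x X).card : ℝ)⌋ ≤ ⌊q * (X.card : ℝ) + 1⌋ := Int.floor_le_floor h1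
    rw [show q * (X.card : ℝ) + 1 = q * (X.card : ℝ) + (1 : ℤ) by push_cast; ring,
      Int.floor_add_intCast] at this
    have : ((⌊q * ((insert x X).card : ℝ)⌋ : ℤ) : ℝ) ≤ ((⌊q * (X.card : ℝ)⌋ + 1 : ℤ) : ℝ) := by
      exact_mod_cast this
    push_cast at this
    linarith
  -- filter of insert
  have hc' : (((insert x X).filter (fun y => y < w)).card : ℝ)
      = if x < w then c + 1 else c := by
    rw [Finset.filter_insert]
    split_ifs with h
    · rw [Finset.card_insert_of_notMem (fun hmem => hx (Finset.mem_filter.mp hmem).1)]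
      push_cast; ring
    · rfl
  have key : |(c - m) - ((((insert x X).filter (fun y => y < w)).card : ℝ) - m')| ≤ 1 := by
    rw [hc']
    split_ifs with h
    · apply abs_le.mpr; constructor <;> linarith
    · apply abs_le.mpr; constructor <;> linarith
  have habs := abs_abs_sub_abs_le_abs_sub (c - m)
    ((((insert x X).filter (fun y => y < w)).card : ℝ) - m')
  have e1 : quantileUtility q X w = -|c - m| := rfl
  have e2 : quantileUtility q (insert x X) w
      = -|(((insert x X).filter (fun y => y < w)).card : ℝ) - m'| := rfl
  rw [e1, e2, show -|c - m| - -|(((insert x X).filter (fun y => y < w)).card : ℝ) - m'|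
      = -(|c - m| - |(((insert x X).filter (fun y => y < w)).card : ℝ) - m'|) by ring, abs_neg]
  exact habs.trans key

lemma expWeight_integrable (ε a b q : ℝ) (hε : 0 < ε) (X : Finset ℝ) :
    IntegrableOn (fun w => Real.exp (ε * quantileUtility q X w / 2)) (Set.Ioo a b) volume := by
  apply Integrable.mono' (g := fun _ => (1 : ℝ))
    (integrableOn_const (by simp [Real.volume_Ioo]))
  · exact (Real.measurable_exp.comp
      (((measurable_const.mul (quantileUtility_measurable q X)).div_const 2))).aestronglyMeasurable
  · filter_upwards with w
    rw [Real.norm_eq_abs, abs_of_pos (Real.exp_pos _)]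
    have : ε * quantileUtility q X w / 2 ≤ 0 := by
      have := quantileUtility_nonpos q X w
      nlinarith
    exact Real.exp_le_one_iff.mpr this

lemma normConst_pos (ε a b q : ℝ) (hε : 0 < ε) (hab : a < b) (hq : q ∈ Set.Icc (0 : ℝ) 1)
    (X : Finset ℝ) :
    0 < ∫ w in Set.Ioo a b, Real.exp (ε * quantileUtility q X w / 2) := by
  have hconst : IntegrableOn (fun _ : ℝ => Real.exp (-(ε * X.card) / 2)) (Set.Ioo a b) volume :=
    integrableOn_const (by simp [Real.volume_Ioo])
  have hle : ∀ w ∈ Set.Ioo a b,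
      Real.exp (-(ε * X.card) / 2) ≤ Real.exp (ε * quantileUtility q X w / 2) := by
    intro w _
    apply Real.exp_le_exp.mpr
    have := quantileUtility_lb q hq X w
    nlinarith
  calc (0 : ℝ) < Real.exp (-(ε * X.card) / 2) * (b - a) :=
        mul_pos (Real.exp_pos _) (by linarith)
    _ = ∫ _ in Set.Ioo a b, Real.exp (-(ε * X.card) / 2) := by
        rw [setIntegral_const, Real.volume_real_Ioo_of_le hab.le, smul_eq_mul,
          mul_comm]
    _ ≤ _ := setIntegral_mono_on hconst (expWeight_integrable ε a b q hε X)
        measurableSet_Ioo hle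

lemma contExpMech_key (ε a b q : ℝ) (hε : 0 < ε) (hab : a < b)
    (hq : q ∈ Set.Icc (0 : ℝ) 1) (X X' : Finset ℝ)
    (hsens : ∀ w, |quantileUtility q X w - quantileUtility q X' w| ≤ 1)
    (S : Set ℝ) (hS : MeasurableSet S) :
    contExpMech ε a b q X S ≤ ENNReal.ofReal (Real.exp ε) * contExpMech ε a b q X' S := by
  set Z := ∫ w in Set.Ioo a b, Real.exp (ε * quantileUtility q X w / 2) with hZ
  set Z' := ∫ w in Set.Ioo a b, Real.exp (ε * quantileUtility q X' w / 2) with hZ'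
  have hZpos : 0 < Z := normConst_pos ε a b q hε hab hq X
  have hZ'pos : 0 < Z' := normConst_pos ε a b q hε hab hq X'
  -- Z ≥ exp(-ε/2) * Z'
  have hZZ' : Real.exp (-ε / 2) * Z' ≤ Z := by
    have hpt : ∀ w ∈ Set.Ioo a b,
        Real.exp (-ε / 2) * Real.exp (ε * quantileUtility q X' w / 2)
          ≤ Real.exp (ε * quantileUtility q X w / 2) := by
      intro w _
      rw [← Real.exp_add]
      apply Real.exp_le_exp.mpr
      have h := (abs_le.mp (hsens w)).1
      nlinarith
    have h1 : IntegrableOn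
        (fun w => Real.exp (-ε / 2) * Real.exp (ε * quantileUtility q X' w / 2))
        (Set.Ioo a b) volume := (expWeight_integrable ε a b q hε X').const_mul _
    have := setIntegral_mono_on h1 (expWeight_integrable ε a b q hε X) measurableSet_Ioo hpt
    rwa [integral_const_mul] at this
  -- pointwise density inequality
  have hptw : ∀ w : ℝ,
      ENNReal.ofReal (Real.exp (ε * quantileUtility q X w / 2) / Z)
        ≤ ENNReal.ofReal (Real.exp ε) *
          ENNReal.ofReal (Real.exp (ε * quantileUtility q X' w / 2) / Z') := by
    intro w
    rw [← ENNReal.ofReal_mul (Real.exp_pos ε).le]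
    apply ENNReal.ofReal_le_ofReal
    rw [div_le_iff₀ hZpos]
    have hA : Real.exp (ε * quantileUtility q X w / 2)
        ≤ Real.exp (ε / 2) * Real.exp (ε * quantileUtility q X' w / 2) := by
      rw [← Real.exp_add]
      apply Real.exp_le_exp.mpr
      have h := (abs_le.mp (hsens w)).2
      nlinarith
    have hee : Real.exp ε * Real.exp (-ε / 2) = Real.exp (ε / 2) := by
      rw [← Real.exp_add]; ring_nf
    calc Real.exp (ε * quantileUtility q X w / 2)
        ≤ Real.exp (ε / 2) * Real.exp (ε * quantileUtility q X' w / 2) := hA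
      _ = Real.exp ε * (Real.exp (ε * quantileUtility q X' w / 2) / Z') *
            (Real.exp (-ε / 2) * Z') := by
          rw [← hee]; field_simp
      _ ≤ Real.exp ε * (Real.exp (ε * quantileUtility q X' w / 2) / Z') * Z :=
          mul_le_mul_of_nonneg_left hZZ' (by positivity)
  calc contExpMech ε a b q X S
      = ∫⁻ w in S, ENNReal.ofReal (Real.exp (ε * quantileUtility q X w / 2) / Z)
          ∂(volume.restrict (Set.Ioo a b)) := by
        rw [contExpMech, withDensity_apply _ hS]
    _ ≤ ∫⁻ w in S, ENNReal.ofReal (Real.exp ε) *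
          ENNReal.ofReal (Real.exp (ε * quantileUtility q X' w / 2) / Z')
          ∂(volume.restrict (Set.Ioo a b)) := lintegral_mono fun w => hptw w
    _ = ENNReal.ofReal (Real.exp ε) *
          ∫⁻ w in S, ENNReal.ofReal (Real.exp (ε * quantileUtility q X' w / 2) / Z')
          ∂(volume.restrict (Set.Ioo a b)) := lintegral_const_mul' _ _ ENNReal.ofReal_ne_top
    _ = ENNReal.ofReal (Real.exp ε) * contExpMech ε a b q X' S := by
        rw [contExpMech, withDensity_apply _ hS]

/-- The continuous exponential mechanism for a single quantile is `ε`-differentially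
private with respect to adding or removing one data point. -/
theorem contExpMech_isDP (ε a b q : ℝ) (hε : 0 < ε) (hab : a < b)
    (hq : q ∈ Set.Icc (0 : ℝ) 1)
    (X X' : Finset ℝ) (hN : FNeighbor X X')
    (hX : ∀ x ∈ X, x ∈ Set.Ioo a b) (hX' : ∀ x ∈ X', x ∈ Set.Ioo a b)
    (S : Set ℝ) (hS : MeasurableSet S) :
    contExpMech ε a b q X S ≤ ENNReal.ofReal (Real.exp ε) * contExpMech ε a b q X' S := by
  apply contExpMech_key ε a b q hε hab hq X X' _ S hS
  rcases hN with ⟨x, hx, rfl⟩ | ⟨x, hx, rfl⟩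
  · exact fun w => quantileUtility_sens q hq X x hx w
  · intro w
    rw [abs_sub_comm]
    exact quantileUtility_sens q hq X' x hx w
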